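/- Let ζ : ℕ → ℝ be a strictly increasing knot sequence, p ≥ 1, and let x be a real number that is not equal to any knot ζ_j. Then the B-spline basis function B_{i,p} is differentiable at x and its derivative satisfies B'_{i,p}(x) = (p/(ζ_{i+p} − ζ_i)) · B_{i,p−1}(x) − (p/(ζ_{i+p+1} − ζ_{i+1})) · B_{i+1,p−1}(x). -/

import Mathlib

noncomputable def coxDeBoor (ζ : ℕ → ℝ) : ℕ → ℕ → ℝ → ℝ
  | 0, i, x => if ζ i ≤ x ∧ x < ζ (i + 1) then 1 else 0
  | p + 1, i, x =>
      (if ζ (i + p + 1) = ζ i then 0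
       else (x - ζ i) / (ζ (i + p + 1) - ζ i) * coxDeBoor ζ p i x) +
      (if ζ (i + p + 2) = ζ (i + 1) then 0
       else (ζ (i + p + 2) - x) / (ζ (i + p + 2) - ζ (i + 1)) * coxDeBoor ζ p (i + 1) x)

noncomputable def cdbD (ζ : ℕ → ℝ) (x : ℝ) : ℕ → ℕ → ℝ
  | 0, _ => 0
  | p + 1, i =>
      ((p : ℝ) + 1) / (ζ (i + p + 1) - ζ i) * coxDeBoor ζ p i x -
      ((p : ℝ) + 1) / (ζ (i + p + 2) - ζ (i + 1)) * coxDeBoor ζ p (i + 1) x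

lemma cdb_deg0 (ζ : ℕ → ℝ) (i : ℕ) (x : ℝ) (h1 : x ≠ ζ i) (h2 : x ≠ ζ (i + 1)) :
    HasDerivAt (coxDeBoor ζ 0 i) 0 x := by
  have hev : coxDeBoor ζ 0 i =ᶠ[nhds x] fun _ => coxDeBoor ζ 0 i x := by
    by_cases h : ζ i ≤ x ∧ x < ζ (i + 1)
    · have hx1 : ζ i < x := lt_of_le_of_ne h.1 (Ne.symm h1)
      filter_upwards [Ioo_mem_nhds hx1 h.2] with y hy
      simp [coxDeBoor, hy.1.le, hy.2, h]
    · rcases not_and_or.mp h with h' | h'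
      · have hx1 : x < ζ i := lt_of_not_ge h'
        filter_upwards [Iio_mem_nhds hx1] with y hy
        have hy' : y < ζ i := Set.mem_Iio.mp hy
        simp [coxDeBoor, not_le.mpr hy', h]
      · have hx1 : ζ (i + 1) < x := lt_of_le_of_ne (not_lt.mp h') h2.symm
        filter_upwards [Ioi_mem_nhds hx1] with y hy
        have hy' : ¬ y < ζ (i + 1) := not_lt.mpr (le_of_lt (Set.mem_Ioi.mp hy))
        simp [coxDeBoor, hy', h]
  exact (hasDerivAt_const x _).congr_of_eventuallyEq hev

set_option maxHeartbeats 1000000 in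
lemma cdb_key (a b c d e f X B0 B1 B2 q : ℝ)
    (h1 : d - a ≠ 0) (h2 : e - b ≠ 0) (h3 : f - c ≠ 0) (h4 : e - a ≠ 0) (h5 : f - b ≠ 0) :
    (q + 1 + 1) / (e - a) * ((X - a) / (d - a) * B0 + (e - X) / (e - b) * B1) -
      (q + 1 + 1) / (f - b) * ((X - b) / (e - b) * B1 + (f - X) / (f - c) * B2) =
    1 / (e - a) * ((X - a) / (d - a) * B0 + (e - X) / (e - b) * B1) +
      (X - a) / (e - a) * ((q + 1) / (d - a) * B0 - (q + 1) / (e - b) * B1) +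
      (-1 / (f - b) * ((X - b) / (e - b) * B1 + (f - X) / (f - c) * B2) +
        (f - X) / (f - b) * ((q + 1) / (e - b) * B1 - (q + 1) / (f - c) * B2)) := by
  field_simp
  ring

set_option maxHeartbeats 1000000 in
lemma cdb_aux (ζ : ℕ → ℝ) (hζ : StrictMono ζ) (x : ℝ) (hx : ∀ j : ℕ, x ≠ ζ j) :
    ∀ p i, HasDerivAt (coxDeBoor ζ p i) (cdbD ζ x p i) x := by
  intro p
  induction p with
  | zero => intro i; exact cdb_deg0 ζ i x (hx i) (hx (i + 1))
  | succ p IH =>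
    intro i
    have hne : ∀ a b : ℕ, a ≠ b → ζ a ≠ ζ b := fun a b h => hζ.injective.ne h
    have h1 : ¬ ζ (i + p + 1) = ζ i := hne _ _ (by omega)
    have h2 : ¬ ζ (i + p + 2) = ζ (i + 1) := hne _ _ (by omega)
    have hfun : coxDeBoor ζ (p + 1) i = fun y =>
        (y - ζ i) / (ζ (i + p + 1) - ζ i) * coxDeBoor ζ p i y +
        (ζ (i + p + 2) - y) / (ζ (i + p + 2) - ζ (i + 1)) * coxDeBoor ζ p (i + 1) y := by
      funext y
      simp only [coxDeBoor, if_neg h1, if_neg h2]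
    rw [hfun]
    have hf : HasDerivAt (fun y : ℝ => (y - ζ i) / (ζ (i + p + 1) - ζ i))
        (1 / (ζ (i + p + 1) - ζ i)) x := by
      simpa using ((hasDerivAt_id x).sub_const (ζ i)).div_const (ζ (i + p + 1) - ζ i)
    have hg : HasDerivAt (fun y : ℝ => (ζ (i + p + 2) - y) / (ζ (i + p + 2) - ζ (i + 1)))
        (-1 / (ζ (i + p + 2) - ζ (i + 1))) x := by
      have := ((hasDerivAt_const x (ζ (i + p + 2))).sub (hasDerivAt_id x)).div_const
        (ζ (i + p + 2) - ζ (i + 1))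
      simpa using this
    have hsum := (hf.mul (IH i)).add (hg.mul (IH (i + 1)))
    refine hsum.congr_deriv (Eq.symm ?_)
    have hd1 : ζ (i + p + 1) - ζ i ≠ 0 := sub_ne_zero.mpr h1
    have hd2 : ζ (i + p + 2) - ζ (i + 1) ≠ 0 := sub_ne_zero.mpr h2
    cases p with
    | zero =>
      simp only [cdbD]
      push_cast
      ring
    | succ q =>
      have he1 : ζ (i + q + 1) - ζ i ≠ 0 := sub_ne_zero.mpr (hne _ _ (by omega))
      have he2 : ζ (i + q + 2) - ζ (i + 1) ≠ 0 := sub_ne_zero.mpr (hne _ _ (by omega))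
      have he3 : ζ (i + q + 3) - ζ (i + 2) ≠ 0 := sub_ne_zero.mpr (hne _ _ (by omega))
      have he4 : ζ (i + q + 2) - ζ i ≠ 0 := sub_ne_zero.mpr (hne _ _ (by omega))
      have he5 : ζ (i + q + 3) - ζ (i + 1) ≠ 0 := sub_ne_zero.mpr (hne _ _ (by omega))
      have hB1 : coxDeBoor ζ (q + 1) i x =
          (x - ζ i) / (ζ (i + q + 1) - ζ i) * coxDeBoor ζ q i x +
          (ζ (i + q + 2) - x) / (ζ (i + q + 2) - ζ (i + 1)) * coxDeBoor ζ q (i + 1) x := by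
        simp only [coxDeBoor, if_neg (hne (i + q + 1) i (by omega)),
          if_neg (hne (i + q + 2) (i + 1) (by omega))]
      have hB2 : coxDeBoor ζ (q + 1) (i + 1) x =
          (x - ζ (i + 1)) / (ζ (i + q + 2) - ζ (i + 1)) * coxDeBoor ζ q (i + 1) x +
          (ζ (i + q + 3) - x) / (ζ (i + q + 3) - ζ (i + 2)) * coxDeBoor ζ q (i + 2) x := by
        simp only [coxDeBoor]
        rw [if_neg (hne (i + 1 + q + 1) (i + 1) (by omega)),
          if_neg (hne (i + 1 + q + 2) (i + 1 + 1) (by omega)),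
          show i + 1 + q + 1 = i + q + 2 by omega, show i + 1 + q + 2 = i + q + 3 by omega,
          show i + 1 + 1 = i + 2 by omega]
      simp only [cdbD]
      rw [show i + (q + 1) + 1 = i + q + 2 by omega, show i + (q + 1) + 2 = i + q + 3 by omega,
        show i + 1 + q + 1 = i + q + 2 by omega, show i + 1 + q + 2 = i + q + 3 by omega,
        show i + 1 + 1 = i + 2 by omega, hB1, hB2]
      push_cast
      linear_combination cdb_key (ζ i) (ζ (i + 1)) (ζ (i + 2)) (ζ (i + q + 1)) (ζ (i + q + 2))
        (ζ (i + q + 3)) x (coxDeBoor ζ q i x) (coxDeBoor ζ q (i + 1) x) (coxDeBoor ζ q (i + 2) x)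
        (q : ℝ) he1 he2 he3 he4 he5

theorem coxDeBoor_hasDerivAt (ζ : ℕ → ℝ) (hζ : StrictMono ζ) (p : ℕ) (hp : 1 ≤ p)
    (i : ℕ) (x : ℝ) (hx : ∀ j : ℕ, x ≠ ζ j) :
    HasDerivAt (coxDeBoor ζ p i)
      ((p : ℝ) / (ζ (i + p) - ζ i) * coxDeBoor ζ (p - 1) i x -
        (p : ℝ) / (ζ (i + p + 1) - ζ (i + 1)) * coxDeBoor ζ (p - 1) (i + 1) x) x := by
  obtain ⟨q, rfl⟩ : ∃ q, p = q + 1 := ⟨p - 1, by omega⟩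
  have h := cdb_aux ζ hζ x hx (q + 1) i
  simp only [cdbD] at h
  convert h using 2
  all_goals push_cast
  all_goals try rw [show i + (q + 1) = i + q + 1 by omega]
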